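/- arXiv:2505.14947 — 6 statements merged into one kernel-verified Lean document; each statement's English description precedes it below -/
import Mathlib

section
/- Let n ≥ 1, let U and A be n×n complex matrices with U unitary, and suppose (v_1, …, v_n) is an orthonormal basis of ℂⁿ (with the standard Hermitian inner product) such that U v_i = λ_i v_i for complex numbers λ_1, …, λ_n. Then for every m ∈ ℤ, tr(U^m A) = ∑_{i=1}^n λ_i^m ⟨v_i, A v_i⟩, and for every real t with 0 < t < 1 the two-sided series ∑_{m∈ℤ} t^{|m|} tr(U^m A) converges absolutely and equals ∑_{i=1}^n ((1 − t²)/|t − λ_i|²) ⟨v_i, A v_i⟩. -/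
open scoped ComplexConjugate

private theorem trace_onb' (n : ℕ) (v : Fin n → EuclideanSpace ℂ (Fin n)) (hv : Orthonormal ℂ v)
    (B : Matrix (Fin n) (Fin n) ℂ) :
    B.trace = ∑ i, (inner ℂ (v i) (WithLp.toLp 2 (B.mulVec (v i))) : ℂ) := by
  set V : Matrix (Fin n) (Fin n) ℂ := Matrix.of fun j i => v i j with hV
  have h1 : V.conjTranspose * V = 1 := by
    ext i i'
    have := (orthonormal_iff_ite (𝕜 := ℂ)).mp hv i i'
    simp only [PiLp.inner_apply, RCLike.inner_apply] at this
    simp only [Matrix.mul_apply, Matrix.conjTranspose_apply, hV, Matrix.one_apply,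
      Matrix.of_apply, ← this]
    exact Finset.sum_congr rfl fun j _ => by rw [mul_comm]; rfl
  have h2 : V * V.conjTranspose = 1 := mul_eq_one_comm.mp h1
  have key : ∀ j k, (∑ i, conj (v i j) * v i k) = if k = j then 1 else 0 := by
    intro j k
    have := congrFun (congrFun h2 k) j
    simp only [Matrix.mul_apply, Matrix.conjTranspose_apply, hV, Matrix.one_apply,
      Matrix.of_apply] at this
    rw [← this]
    congr 1; ext i; rw [mul_comm]; rfl
  calc B.trace = ∑ j, ∑ k, B j k * if k = j then 1 else 0 := by
        simp [Matrix.trace, Matrix.diag]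
    _ = ∑ j, ∑ k, B j k * ∑ i, conj (v i j) * v i k := by
        simp_rw [key]
    _ = ∑ i, (inner ℂ (v i) (WithLp.toLp 2 (B.mulVec (v i))) : ℂ) := by
        have swap : ∀ f : Fin n → Fin n → Fin n → ℂ,
            (∑ j, ∑ k, ∑ i, f i j k) = ∑ i, ∑ j, ∑ k, f i j k := by
          intro f
          calc (∑ j, ∑ k, ∑ i, f i j k) = ∑ j, ∑ i, ∑ k, f i j k :=
                Finset.sum_congr rfl fun j _ => Finset.sum_comm
            _ = _ := Finset.sum_comm
        simp only [PiLp.inner_apply, RCLike.inner_apply, Matrix.mulVec, dotProduct,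
          Finset.mul_sum]
        rw [swap fun i j k => B j k * (conj (v i j) * v i k)]
        refine Finset.sum_congr rfl fun i _ => Finset.sum_congr rfl fun j _ => ?_
        rw [Finset.sum_mul]; exact Finset.sum_congr rfl fun k _ => by ring

private theorem series_lam' (t : ℝ) (ht0 : 0 < t) (ht1 : t < 1) (l : ℂ)
    (hl : ‖l‖ = 1) :
    HasSum (fun m : ℤ => ((t ^ |m| : ℝ) : ℂ) * l ^ m)
      (((1 - t ^ 2) / ‖(t : ℂ) - l‖ ^ 2 : ℝ) : ℂ) := by
  have hln : l ≠ 0 := by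
    intro h; rw [h] at hl; simp at hl
  have hmc : l * conj l = 1 := by
    rw [Complex.mul_conj]; norm_cast; rw [← Complex.sq_norm, hl]; norm_num
  have hinv : l⁻¹ = conj l := by
    field_simp
    linear_combination -hmc
  have h1 : ‖(t : ℂ) * l‖ < 1 := by
    simp [hl, abs_of_pos ht0, ht1]
  have h2 : ‖(t : ℂ) * conj l‖ < 1 := by
    simp [Complex.norm_conj, abs_of_pos ht0, ht1, hl]
  have hs1 : HasSum (fun k : ℕ => ((t : ℂ) * l) ^ k) (1 - (t : ℂ) * l)⁻¹ :=
    hasSum_geometric_of_norm_lt_one h1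
  have hs2 : HasSum (fun k : ℕ => ((t : ℂ) * conj l) ^ (k + 1))
      ((t : ℂ) * conj l * (1 - (t : ℂ) * conj l)⁻¹) := by
    simpa [pow_succ, mul_comm, ← mul_assoc] using
      (hasSum_geometric_of_norm_lt_one h2).mul_left ((t : ℂ) * conj l)
  have hs : HasSum (fun m : ℤ => ((t ^ |m| : ℝ) : ℂ) * l ^ m)
      ((1 - (t : ℂ) * l)⁻¹ + (t : ℂ) * conj l * (1 - (t : ℂ) * conj l)⁻¹) := by
    apply HasSum.of_nat_of_neg_add_one
    · convert hs1 using 2 with k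
      push_cast [abs_of_nonneg (Int.ofNat_nonneg k)]
      rw [mul_pow]
      norm_num
    · convert hs2 using 2 with k
      have ha : |(-((k : ℤ) + 1))| = ((k + 1 : ℕ) : ℤ) := by
        rw [abs_neg]; push_cast; exact abs_of_nonneg (by positivity)
      have hb : (-((k : ℤ) + 1)) = -((k + 1 : ℕ) : ℤ) := by push_cast; ring
      rw [ha, hb, zpow_neg, zpow_natCast, zpow_natCast, ← inv_pow, hinv, mul_pow]
      push_cast
      ring
  convert hs using 1
  have hd1 : (1 - (t : ℂ) * l) ≠ 0 := by
    intro h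
    have h' : (t : ℂ) * l = 1 := by linear_combination -h
    rw [h'] at h1; simp at h1
  have hd2 : (1 - (t : ℂ) * conj l) ≠ 0 := by
    intro h
    have h' : (t : ℂ) * conj l = 1 := by linear_combination -h
    rw [h'] at h2; simp at h2
  have htl : (t : ℂ) - l ≠ 0 := by
    intro h
    have : (t : ℂ) = l := by linear_combination h
    rw [← this] at hl
    rw [Complex.norm_real, Real.norm_eq_abs, abs_of_pos ht0] at hl
    linarith
  have htcl : (t : ℂ) - conj l ≠ 0 := by
    intro h
    have : (t : ℂ) = conj l := by linear_combination h
    have h2 : ‖conj l‖ = 1 := by rw [Complex.norm_conj, hl]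
    rw [← this] at h2
    rw [Complex.norm_real, Real.norm_eq_abs, abs_of_pos ht0] at h2
    linarith
  have habs : ((‖(t : ℂ) - l‖ ^ 2 : ℝ) : ℂ)
      = ((t : ℂ) - l) * ((t : ℂ) - conj l) := by
    rw [Complex.sq_norm, ← Complex.mul_conj]
    simp [map_sub, Complex.conj_ofReal]
  push_cast
  push_cast at habs
  rw [habs]
  rw [div_eq_iff (mul_ne_zero htl htcl)]
  field_simp
  linear_combination (-(1 + (t:ℂ)^3*(l + conj l) - (t:ℂ)^2*(l*conj l + 2))) * hmc

private theorem eig_abs' (n : ℕ) (U : Matrix (Fin n) (Fin n) ℂ)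
    (hU : U * U.conjTranspose = 1)
    (v : Fin n → EuclideanSpace ℂ (Fin n)) (hv : Orthonormal ℂ v)
    (lam : Fin n → ℂ) (heig : ∀ i, U.mulVec (v i) = lam i • v i) (i : Fin n) :
    ‖lam i‖ = 1 := by
  have hU' : U.conjTranspose * U = 1 := mul_eq_one_comm.mp hU
  have h3 : (inner ℂ (v i) (v i) : ℂ) = 1 := by rw [orthonormal_iff_ite.mp hv i i, if_pos rfl]
  have h1 : inner (𝕜 := ℂ) (E := EuclideanSpace ℂ (Fin n)) (WithLp.toLp 2 (U.mulVec (v i))) (WithLp.toLp 2 (U.mulVec (v i)))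
      = 1 := by
    have he : inner (𝕜 := ℂ) (E := EuclideanSpace ℂ (Fin n)) (WithLp.toLp 2 (U.mulVec (v i))) (WithLp.toLp 2 (U.mulVec (v i)))
        = dotProduct (star (U.mulVec (v i))) (U.mulVec (v i)) := by
      simp only [PiLp.inner_apply, RCLike.inner_apply, dotProduct]
      exact Finset.sum_congr rfl fun x _ => by rw [mul_comm]; rfl
    rw [he, Matrix.star_mulVec, Matrix.dotProduct_mulVec, Matrix.vecMul_vecMul, hU',
      Matrix.vecMul_one]
    rw [← h3]; simp only [PiLp.inner_apply, RCLike.inner_apply, dotProduct]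
    exact Finset.sum_congr rfl fun x _ => by rw [mul_comm]; rfl
  rw [heig i, WithLp.toLp_smul, WithLp.toLp_ofLp, inner_smul_left, inner_smul_right, h3, mul_one] at h1
  have h4 : ‖lam i‖ ^ 2 = 1 := by
    have := congrArg (‖·‖) h1
    simpa [map_mul, Complex.norm_conj, sq] using this
  nlinarith [norm_nonneg (lam i)]

private theorem eig_zpow' (n : ℕ) (U : Matrix (Fin n) (Fin n) ℂ)
    (hU : U * U.conjTranspose = 1)
    (x : EuclideanSpace ℂ (Fin n)) (l : ℂ) (hl : l ≠ 0)
    (heig : U.mulVec x = l • x) (m : ℤ) :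
    (U ^ m).mulVec x = l ^ m • x := by
  have hdet : IsUnit U.det := Matrix.isUnit_det_of_right_inverse hU
  have hnat : ∀ k : ℕ, (U ^ k).mulVec x = l ^ k • x := by
    intro k
    induction k with
    | zero => simp [Matrix.mulVec_one]
    | succ k ih =>
      rw [pow_succ, ← Matrix.mulVec_mulVec, heig, Matrix.mulVec_smul, ih, smul_smul,
        ← pow_succ']
  cases m with
  | ofNat k => simpa [zpow_natCast] using hnat k
  | negSucc k =>
    rw [zpow_negSucc, zpow_negSucc]
    have hdetk : IsUnit (U ^ (k + 1)).det := by
      simpa [Matrix.det_pow] using hdet.pow (k + 1)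
    have hinv : (U ^ (k + 1))⁻¹ * (U ^ (k + 1)) = 1 := Matrix.nonsing_inv_mul _ hdetk
    have hx : x = (l ^ (k + 1)) • (U ^ (k + 1))⁻¹.mulVec x := by
      conv_lhs => rw [← Matrix.one_mulVec x, ← hinv, ← Matrix.mulVec_mulVec, hnat (k + 1),
        Matrix.mulVec_smul]
    calc (U ^ (k + 1))⁻¹.mulVec x
        = (l ^ (k + 1))⁻¹ • ((l ^ (k + 1)) • (U ^ (k + 1))⁻¹.mulVec x) := by
          rw [smul_smul, inv_mul_cancel₀ (pow_ne_zero _ hl), one_smul]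
      _ = (l ^ (k + 1))⁻¹ • x := by rw [← hx]


/-- If `U` is unitary with orthonormal eigenbasis `v` and eigenvalues `λ_i`, then
`tr(U^m A) = ∑ i, λ_i^m ⟨v_i, A v_i⟩` for all `m ∈ ℤ`, and for `0 < t < 1` the series
`∑_{m ∈ ℤ} t^{|m|} tr(U^m A)` converges absolutely with sum
`∑ i, ((1 - t²)/|t - λ_i|²) ⟨v_i, A v_i⟩`. -/
theorem abel_trace_sum_with_observable (n : ℕ) (hn : 1 ≤ n)
    (U A : Matrix (Fin n) (Fin n) ℂ) (hU : U * U.conjTranspose = 1)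
    (v : Fin n → EuclideanSpace ℂ (Fin n)) (hv : Orthonormal ℂ v)
    (lam : Fin n → ℂ)
    (heig : ∀ i, U.mulVec (v i) = lam i • v i) :
    (∀ m : ℤ, (U ^ m * A).trace
        = ∑ i, lam i ^ m * (inner ℂ (v i) (WithLp.toLp 2 (A.mulVec (v i))) : ℂ)) ∧
    ∀ t : ℝ, 0 < t → t < 1 →
      Summable (fun m : ℤ => ‖((t ^ |m| : ℝ) : ℂ) * (U ^ m * A).trace‖) ∧
      ∑' m : ℤ, ((t ^ |m| : ℝ) : ℂ) * (U ^ m * A).trace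
        = ∑ i, (((1 - t ^ 2) / ‖(t : ℂ) - lam i‖ ^ 2 : ℝ) : ℂ)
            * (inner ℂ (v i) (WithLp.toLp 2 (A.mulVec (v i))) : ℂ) := by
  have habs := eig_abs' n U hU v hv lam heig
  have hlne : ∀ i, lam i ≠ 0 := by
    intro i h
    have := habs i
    rw [h] at this; simp at this
  -- Part 1
  have part1 : ∀ m : ℤ, (U ^ m * A).trace
      = ∑ i, lam i ^ m * (inner ℂ (v i) (WithLp.toLp 2 (A.mulVec (v i))) : ℂ) := by
    intro m
    rw [Matrix.trace_mul_comm, trace_onb' n v hv]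
    congr 1; ext i
    rw [← Matrix.mulVec_mulVec, eig_zpow' n U hU (v i) (lam i) (hlne i) (heig i) m,
      Matrix.mulVec_smul, WithLp.toLp_smul, inner_smul_right]
  refine ⟨part1, fun t ht0 ht1 => ?_⟩
  set c : Fin n → ℂ := fun i => (inner ℂ (v i) (WithLp.toLp 2 (A.mulVec (v i))) : ℂ) with hc
  -- summability
  have hts : Summable (fun m : ℤ => (t ^ |m| : ℝ)) := by
    apply Summable.of_nat_of_neg_add_one
    · simpa [abs_of_nonneg (Int.ofNat_nonneg _)] using
        summable_geometric_of_lt_one ht0.le ht1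
    · have : Summable (fun k : ℕ => t * t ^ k) :=
        (summable_geometric_of_lt_one ht0.le ht1).mul_left t
      apply this.congr
      intro k
      have ha : |(-((k : ℤ) + 1))| = ((k + 1 : ℕ) : ℤ) := by
        rw [abs_neg]; push_cast; exact abs_of_nonneg (by positivity)
      rw [ha, zpow_natCast, pow_succ, mul_comm]
  have hsummable : Summable (fun m : ℤ => ‖((t ^ |m| : ℝ) : ℂ) * (U ^ m * A).trace‖) := by
    apply Summable.of_nonneg_of_le (fun m => norm_nonneg _)
      (g := fun m : ℤ => ‖((t ^ |m| : ℝ) : ℂ) * (U ^ m * A).trace‖)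
      (f := fun m : ℤ => (t ^ |m| : ℝ) * ∑ i, ‖c i‖)
    · intro m
      rw [norm_mul]
      have h1 : ‖((t ^ |m| : ℝ) : ℂ)‖ = (t ^ |m| : ℝ) := by
        rw [Complex.norm_real, Real.norm_eq_abs, abs_of_pos (zpow_pos ht0 _)]
      rw [h1]
      apply mul_le_mul_of_nonneg_left _ (zpow_pos ht0 _).le
      rw [part1 m]
      refine (norm_sum_le _ _).trans ?_
      apply Finset.sum_le_sum
      intro i _
      rw [norm_mul, norm_zpow, habs i, one_zpow, one_mul]
    · exact hts.mul_right _
  refine ⟨hsummable, ?_⟩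
  -- final sum
  have hterm : (fun m : ℤ => ((t ^ |m| : ℝ) : ℂ) * (U ^ m * A).trace)
      = fun m : ℤ => ∑ i, (((t ^ |m| : ℝ) : ℂ) * lam i ^ m) * c i := by
    funext m
    rw [part1 m, Finset.mul_sum]
    congr 1; ext i; ring
  rw [hterm]
  rw [Summable.tsum_finsetSum (fun i _ => ((series_lam' t ht0 ht1 (lam i) (habs i)).mul_right (c i)).summable)]
  congr 1; ext i
  exact ((series_lam' t ht0 ht1 (lam i) (habs i)).mul_right (c i)).tsum_eq
end

section
/- Let f : ℝ → ℂ be continuous and 2π-periodic. Then the limit as t → 1 from the left of (1/(2π)) ∫_{−π}^{π} ((1 − t²)/|t − e^{iθ}|²) f(θ) dθ equals f(0). -/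
open Filter

section PoissonAux
open Complex
lemma normSq_helper (t θ : ℝ) :
    ‖(t:ℂ) - Complex.exp (Complex.I * θ)‖ ^ 2
      = t^2 - 2*t*Real.cos θ + 1 := by
  rw [mul_comm, Complex.sq_norm, Complex.normSq_apply]
  simp [Complex.exp_ofReal_mul_I_re, Complex.exp_ofReal_mul_I_im]
  ring_nf
  nlinarith [Real.sin_sq_add_cos_sq θ]
lemma kernel_eq (t θ : ℝ) (ht : |t| < 1) :
    (((1 - t^2) / ‖(t:ℂ) - Complex.exp (Complex.I * θ)‖ ^ 2 : ℝ) : ℂ)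
      = 1 + t * Complex.exp (Complex.I * θ) / (1 - t * Complex.exp (Complex.I * θ))
          + t * Complex.exp (-(Complex.I * θ)) / (1 - t * Complex.exp (-(Complex.I * θ))) := by
  set z := Complex.exp (Complex.I * θ) with hzdef
  have hz1 : ‖z‖ = 1 := by
    rw [hzdef, mul_comm]; exact Complex.norm_exp_ofReal_mul_I θ
  have hz0 : z ≠ 0 := by
    intro h; rw [h] at hz1; simp at hz1
  have hinv : Complex.exp (-(Complex.I * θ)) = z⁻¹ := by
    rw [hzdef, ← Complex.exp_neg]
  have habs : (t:ℂ) - z ≠ 0 := by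
    intro h
    have h' : (t:ℂ) = z := by linear_combination h
    have : ‖(t:ℂ)‖ = 1 := by rw [h', hz1]
    rw [Complex.norm_real, Real.norm_eq_abs] at this
    linarith [ht]
  have h1 : (1 : ℂ) - t * z ≠ 0 := by
    intro h
    have h' : (t:ℂ) * z = 1 := by linear_combination -h
    have : ‖(t:ℂ) * z‖ = 1 := by rw [h']; simp
    rw [norm_mul, hz1, Complex.norm_real, Real.norm_eq_abs, mul_one] at this
    linarith [ht]
  have h2 : (1 : ℂ) - t * z⁻¹ ≠ 0 := by
    intro h
    have h' : (t:ℂ) * z⁻¹ = 1 := by linear_combination -h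
    have : ‖(t:ℂ) * z⁻¹‖ = 1 := by rw [h']; simp
    rw [norm_mul, norm_inv, hz1, Complex.norm_real, Real.norm_eq_abs] at this
    simp at this
    linarith [ht]
  have habs2 : (t:ℂ) - z⁻¹ ≠ 0 := by
    intro h
    have h' : (t:ℂ) = z⁻¹ := by linear_combination h
    have : ‖(t:ℂ)‖ = 1 := by rw [h', norm_inv, hz1]; norm_num
    rw [Complex.norm_real, Real.norm_eq_abs] at this
    linarith [ht]
  have hconj : (starRingEnd ℂ) z = z⁻¹ := by
    rw [hzdef, ← Complex.exp_conj, ← Complex.exp_neg]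
    congr 1
    simp [Complex.ext_iff]
  have hA : ((‖(t:ℂ) - z‖ ^ 2 : ℝ) : ℂ) = ((t:ℂ) - z) * ((t:ℂ) - z⁻¹) := by
    rw [Complex.sq_norm, ← Complex.mul_conj, map_sub, Complex.conj_ofReal, hconj]
  have hzt : z - (t:ℂ) ≠ 0 := by
    intro h; apply habs; linear_combination -h
  have habs' : (t:ℂ) * z - 1 ≠ 0 := by
    intro h; apply h1; linear_combination -h
  have h5 : (t:ℂ) * z⁻¹ / (1 - t * z⁻¹) = t / (z - t) := by
    rw [div_eq_div_iff h2 hzt]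
    field_simp
  have hA' : ((t:ℂ) - z) * ((t:ℂ) - z⁻¹) = ((t:ℂ) - z) * ((t:ℂ) * z - 1) / z := by
    field_simp
  rw [Complex.ofReal_div, hA, hinv]
  push_cast
  rw [h5, hA', div_div_eq_mul_div]
  rw [div_eq_iff (mul_ne_zero habs habs')]
  field_simp [h1, hzt]
  ring
lemma hasDerivAt_cexp_I (θ : ℝ) :
    HasDerivAt (fun θ : ℝ => Complex.exp (Complex.I * θ)) (Complex.I * Complex.exp (Complex.I * θ)) θ := by
  have h0 : HasDerivAt (fun θ : ℝ => (θ : ℂ)) 1 θ := by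
    simpa using (hasDerivAt_id θ).ofReal_comp
  have h1 : HasDerivAt (fun θ : ℝ => Complex.I * (θ:ℂ)) Complex.I θ := by
    simpa using h0.const_mul Complex.I
  simpa [mul_comm] using h1.cexp

lemma hasDerivAt_cexp_negI (θ : ℝ) :
    HasDerivAt (fun θ : ℝ => Complex.exp (-(Complex.I * θ)))
      (-(Complex.I * Complex.exp (-(Complex.I * θ)))) θ := by
  have h0 : HasDerivAt (fun θ : ℝ => (θ : ℂ)) 1 θ := by
    simpa using (hasDerivAt_id θ).ofReal_comp
  have h1 : HasDerivAt (fun θ : ℝ => -(Complex.I * (θ:ℂ))) (-Complex.I) θ := by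
    simpa using (h0.const_mul Complex.I).fun_neg
  have h2 := h1.cexp
  convert h2 using 1
  ring

lemma slit_mem (t : ℝ) (ht : |t| < 1) (w : ℂ) (hw : ‖w‖ = 1) :
    (1 - (t:ℂ) * w) ∈ Complex.slitPlane := by
  apply Complex.mem_slitPlane_iff.2
  left
  have h := Complex.re_le_norm ((t:ℂ) * w)
  rw [norm_mul, Complex.norm_real, Real.norm_eq_abs, hw, mul_one] at h
  simp only [Complex.sub_re, Complex.one_re, Complex.mul_re, Complex.ofReal_re, Complex.ofReal_im]
  have : ((t:ℂ) * w).re = t * w.re - 0 * w.im := by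
    simp [Complex.mul_re]
  nlinarith [abs_nonneg t, h, le_abs_self t, neg_abs_le t]

lemma one_sub_t_exp_ne (t : ℝ) (ht : |t| < 1) (w : ℂ) (hw : ‖w‖ = 1) :
    (1:ℂ) - (t:ℂ) * w ≠ 0 := by
  intro h
  have h' : (t:ℂ) * w = 1 := by linear_combination -h
  have : ‖(t:ℂ) * w‖ = 1 := by rw [h']; simp
  rw [norm_mul, Complex.norm_real, Real.norm_eq_abs, hw, mul_one] at this
  linarith

lemma poisson_integral (t : ℝ) (ht : t ∈ Set.Ioo (0:ℝ) 1) :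
    (∫ θ in (-Real.pi)..Real.pi,
      ((1 - t ^ 2) / ‖(t : ℂ) - Complex.exp (Complex.I * (θ : ℂ))‖ ^ 2 : ℝ))
      = 2 * Real.pi := by
  obtain ⟨ht0, ht1⟩ := ht
  have ht' : |t| < 1 := by rw [abs_of_pos ht0]; exact ht1
  set F : ℝ → ℂ := fun θ =>
    1 + t * Complex.exp (Complex.I * θ) / (1 - t * Complex.exp (Complex.I * θ))
      + t * Complex.exp (-(Complex.I * θ)) / (1 - t * Complex.exp (-(Complex.I * θ))) with hF
  have habs1 : ∀ θ : ℝ, ‖Complex.exp (Complex.I * θ)‖ = 1 := fun θ => by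
    rw [mul_comm]; exact Complex.norm_exp_ofReal_mul_I θ
  have habs2 : ∀ θ : ℝ, ‖Complex.exp (-(Complex.I * θ))‖ = 1 := fun θ => by
    have h : -(Complex.I * (θ:ℂ)) = Complex.I * ((-θ : ℝ) : ℂ) := by push_cast; ring
    rw [h]; exact habs1 (-θ)
  have hne1 : ∀ θ : ℝ, (1:ℂ) - t * Complex.exp (Complex.I * θ) ≠ 0 := fun θ =>
    one_sub_t_exp_ne t ht' _ (habs1 θ)
  have hne2 : ∀ θ : ℝ, (1:ℂ) - t * Complex.exp (-(Complex.I * θ)) ≠ 0 := fun θ =>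
    one_sub_t_exp_ne t ht' _ (habs2 θ)
  -- antiderivative
  set H : ℝ → ℂ := fun θ =>
    θ + Complex.I * Complex.log (1 - t * Complex.exp (Complex.I * θ))
      - Complex.I * Complex.log (1 - t * Complex.exp (-(Complex.I * θ))) with hH
  have hderiv : ∀ θ : ℝ, HasDerivAt H (F θ) θ := by
    intro θ
    have h0 : HasDerivAt (fun θ : ℝ => (θ : ℂ)) 1 θ := by
      simpa using (hasDerivAt_id θ).ofReal_comp
    have hu1 : HasDerivAt (fun θ : ℝ => (1:ℂ) - t * Complex.exp (Complex.I * θ))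
        (-(t * (Complex.I * Complex.exp (Complex.I * θ)))) θ := by
      simpa using (((hasDerivAt_cexp_I θ).const_mul (t:ℂ)).const_sub 1)
    have hu2 : HasDerivAt (fun θ : ℝ => (1:ℂ) - t * Complex.exp (-(Complex.I * θ)))
        (-(t * (-(Complex.I * Complex.exp (-(Complex.I * θ)))))) θ := by
      simpa using (((hasDerivAt_cexp_negI θ).const_mul (t:ℂ)).const_sub 1)
    have hl1 := (hu1.clog_real (by
      have := slit_mem t ht' _ (habs1 θ); simpa using this)).const_mul Complex.I
    have hl2 := (hu2.clog_real (by
      have := slit_mem t ht' _ (habs2 θ); simpa using this)).const_mul Complex.I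
    have hcomb := (h0.add hl1).sub hl2
    convert hcomb using 1
    · rfl
    · rfl
    rw [hF]
    have e1 := hne1 θ
    have e2 := hne2 θ
    field_simp
    ring_nf
    simp only [Complex.I_sq]
    ring
  have hFcont : Continuous F := by
    apply Continuous.add
    apply Continuous.add continuous_const
    · exact (Continuous.div (by fun_prop) (by fun_prop) hne1)
    · exact (Continuous.div (by fun_prop) (by fun_prop) hne2)
  have hint : IntervalIntegrable F MeasureTheory.volume (-Real.pi) Real.pi :=
    hFcont.intervalIntegrable _ _
  have hFTC := intervalIntegral.integral_eq_sub_of_hasDerivAt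
    (fun θ _ => hderiv θ) hint
  have hexp_pi : Complex.exp (Complex.I * (Real.pi:ℂ)) = -1 := by
    rw [mul_comm]; exact Complex.exp_pi_mul_I
  have hexp_negpi : Complex.exp (-(Complex.I * (Real.pi:ℂ))) = -1 := by
    rw [Complex.exp_neg, hexp_pi]; norm_num
  have hval : H Real.pi - H (-Real.pi) = 2 * Real.pi := by
    rw [hH]
    simp only []
    have h1 : Complex.I * ((-Real.pi : ℝ):ℂ) = -(Complex.I * (Real.pi:ℂ)) := by push_cast; ring
    rw [h1, neg_neg, hexp_pi, hexp_negpi]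
    push_cast
    ring
  -- identify the real integrand with F
  have hcongr : (∫ θ in (-Real.pi)..Real.pi,
      (((1 - t ^ 2) / ‖(t : ℂ) - Complex.exp (Complex.I * (θ : ℂ))‖ ^ 2 : ℝ) : ℂ))
      = ∫ θ in (-Real.pi)..Real.pi, F θ := by
    apply intervalIntegral.integral_congr
    intro θ _
    exact kernel_eq t θ ht'
  rw [hFTC, hval] at hcongr
  have := intervalIntegral.integral_ofReal (f := fun θ =>
    ((1 - t ^ 2) / ‖(t : ℂ) - Complex.exp (Complex.I * (θ : ℂ))‖ ^ 2 : ℝ))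
    (a := -Real.pi) (b := Real.pi) (μ := MeasureTheory.volume)
  rw [this] at hcongr
  exact_mod_cast hcongr

end PoissonAux

section PoissonMain
open Filter MeasureTheory Set Topology

/-- For continuous `2π`-periodic `f`, the Abel–Poisson means
`(1/(2π)) ∫_{-π}^{π} ((1 - t²)/|t - e^{iθ}|²) f(θ) dθ` tend to `f 0`
as `t → 1⁻` (along `(0,1)`). -/
theorem poisson_kernel_tendsto (f : ℝ → ℂ) (hf : Continuous f)
    (hper : Function.Periodic f (2 * Real.pi)) :
    Tendsto
      (fun t : ℝ => (1 / (2 * (Real.pi : ℂ)))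
        * ∫ θ in (-Real.pi)..Real.pi,
            (((1 - t ^ 2) /
              ‖(t : ℂ) - Complex.exp (Complex.I * (θ : ℂ))‖ ^ 2 : ℝ) : ℂ)
            * f θ)
      (nhdsWithin 1 (Set.Ioo (0 : ℝ) 1)) (nhds (f 0)) := by
  have hπ : (0:ℝ) < Real.pi := Real.pi_pos
  set l : Filter ℝ := nhdsWithin 1 (Set.Ioo (0 : ℝ) 1) with hl
  set P : ℝ → ℝ → ℝ := fun t θ =>
    (1 - t ^ 2) / ‖(t : ℂ) - Complex.exp (Complex.I * (θ : ℂ))‖ ^ 2 with hP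
  set φ : ℝ → ℝ → ℝ := fun t θ => (1 / (2 * Real.pi)) * P t θ with hφ
  -- positivity of the denominator for t ∈ (0,1)
  have hDpos : ∀ t ∈ Set.Ioo (0:ℝ) 1, ∀ θ : ℝ,
      0 < ‖(t : ℂ) - Complex.exp (Complex.I * (θ : ℂ))‖ ^ 2 := by
    intro t ht θ
    rw [normSq_helper]
    nlinarith [Real.cos_le_one θ, ht.1, ht.2]
  have hnφ : ∀ᶠ t in l, ∀ x ∈ Set.Ioc (-Real.pi) Real.pi, 0 ≤ φ t x := by
    filter_upwards [self_mem_nhdsWithin] with t ht x _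
    have h1 : (0:ℝ) ≤ 1 - t^2 := by nlinarith [ht.1, ht.2]
    have := (hDpos t ht x).le
    positivity
  have h'iφ : ∀ᶠ t in l, AEStronglyMeasurable (φ t)
      (volume.restrict (Set.Ioc (-Real.pi) Real.pi)) := by
    filter_upwards [self_mem_nhdsWithin] with t ht
    have hc : Continuous (φ t) := by
      apply continuous_const.mul
      apply Continuous.div continuous_const
      · exact (continuous_norm.comp (by fun_prop)).pow 2
      · exact fun θ => (hDpos t ht θ).ne'
    exact hc.aestronglyMeasurable
  have hiφ : Tendsto (fun t => ∫ x in Set.Ioc (-Real.pi) Real.pi, φ t x) l (𝓝 1) := by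
    apply Tendsto.congr' _ (tendsto_const_nhds (x := (1:ℝ)))
    filter_upwards [self_mem_nhdsWithin] with t ht
    have : ∫ x in Set.Ioc (-Real.pi) Real.pi, φ t x
        = (1 / (2 * Real.pi)) * ∫ x in Set.Ioc (-Real.pi) Real.pi, P t x := by
      rw [MeasureTheory.integral_const_mul]
    rw [this, ← intervalIntegral.integral_of_le (by linarith : -Real.pi ≤ Real.pi),
      poisson_integral t ht]
    field_simp
  have hlφ : ∀ u : Set ℝ, IsOpen u → (0:ℝ) ∈ u →
      TendstoUniformlyOn φ 0 l (Set.Ioc (-Real.pi) Real.pi \ u) := by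
    intro u hu h0u
    obtain ⟨δ, hδpos, hδball⟩ := Metric.isOpen_iff.1 hu 0 h0u
    set δ' := min δ Real.pi with hδ'
    have hδ'pos : 0 < δ' := lt_min hδpos hπ
    have hδ'le : δ' ≤ Real.pi := min_le_right _ _
    have hcoslt : Real.cos δ' < 1 := by
      have := Real.cos_lt_cos_of_nonneg_of_le_pi le_rfl hδ'le hδ'pos
      simpa using this
    set C := 1 - Real.cos δ' with hC
    have hCpos : 0 < C := by simp [hC]; linarith
    rw [Metric.tendstoUniformlyOn_iff]
    intro ε hε
    have hev1 : ∀ᶠ t in l, t ∈ Set.Ioo (0:ℝ) 1 := self_mem_nhdsWithin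
    have hev2 : ∀ᶠ t in l, (1:ℝ)/2 < t := by
      apply eventually_nhdsWithin_of_eventually_nhds
      exact eventually_gt_nhds (by norm_num)
    have hev3 : ∀ᶠ t in l, 1 - t^2 < ε * C := by
      apply eventually_nhdsWithin_of_eventually_nhds
      have hcont : Tendsto (fun t : ℝ => 1 - t^2) (nhds 1) (nhds 0) := by
        have : Continuous (fun t : ℝ => 1 - t^2) := by fun_prop
        have h := this.tendsto 1
        norm_num at h
        exact h
      exact hcont.eventually_lt_const (by positivity)
    filter_upwards [hev1, hev2, hev3] with t ht ht2 ht3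
    intro θ hθ
    obtain ⟨hθIoc, hθu⟩ := hθ
    have hθδ : δ ≤ |θ| := by
      by_contra h
      push_neg at h
      exact hθu (hδball (by simpa [Real.dist_eq] using h))
    have hθδ' : δ' ≤ |θ| := le_trans (min_le_left _ _) hθδ
    have hθpi : |θ| ≤ Real.pi := abs_le.2 ⟨by linarith [hθIoc.1], hθIoc.2⟩
    have hcos : Real.cos θ ≤ Real.cos δ' := by
      rw [← Real.cos_abs θ]
      exact Real.cos_le_cos_of_nonneg_of_le_pi hδ'pos.le hθpi hθδ'
    have hD : C ≤ ‖(t : ℂ) - Complex.exp (Complex.I * (θ : ℂ))‖ ^ 2 := by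
      rw [normSq_helper]
      nlinarith [ht.1, ht.2]
    have hnum : (0:ℝ) ≤ 1 - t^2 := by nlinarith [ht.1, ht.2]
    have hφle : φ t θ ≤ (1 - t^2) / C := by
      have h1 : P t θ ≤ (1 - t^2) / C := div_le_div_of_nonneg_left hnum hCpos hD
      have h2 : (0:ℝ) ≤ P t θ := div_nonneg hnum (hDpos t ht θ).le
      have h3 : (1:ℝ) / (2 * Real.pi) ≤ 1 := by
        rw [div_le_one (by positivity)]
        nlinarith [Real.pi_gt_three]
      calc φ t θ ≤ 1 * P t θ := by
            apply mul_le_mul_of_nonneg_right h3 h2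
        _ = P t θ := one_mul _
        _ ≤ (1 - t^2) / C := h1
    have hφnonneg : 0 ≤ φ t θ := by
      have := (hDpos t ht θ).le
      positivity
    rw [dist_comm]
    rw [Real.dist_eq]
    simp only [Pi.zero_apply, sub_zero]
    rw [abs_of_nonneg hφnonneg]
    calc φ t θ ≤ (1 - t^2)/C := hφle
      _ < ε := by rw [div_lt_iff₀ hCpos]; linarith
  have hmg : IntegrableOn f (Set.Ioc (-Real.pi) Real.pi) volume :=
    hf.integrableOn_Ioc
  have hcg : Tendsto f (nhdsWithin 0 (Set.Ioc (-Real.pi) Real.pi)) (nhds (f 0)) :=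
    (hf.tendsto 0).mono_left nhdsWithin_le_nhds
  have key := tendsto_setIntegral_peak_smul_of_integrableOn_of_tendsto
    (μ := volume) (s := Set.Ioc (-Real.pi) Real.pi) (x₀ := (0:ℝ)) (l := l)
    (φ := φ) (g := f) (a := f 0)
    measurableSet_Ioc measurableSet_Ioc subset_rfl self_mem_nhdsWithin
    measure_Ioc_lt_top.ne hnφ hlφ hiφ h'iφ hmg hcg
  have heq : (fun t : ℝ => (1 / (2 * (Real.pi : ℂ)))
        * ∫ θ in (-Real.pi)..Real.pi,
            (((1 - t ^ 2) /
              ‖(t : ℂ) - Complex.exp (Complex.I * (θ : ℂ))‖ ^ 2 : ℝ) : ℂ)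
            * f θ)
      = fun t : ℝ => ∫ x in Set.Ioc (-Real.pi) Real.pi, φ t x • f x := by
    funext t
    rw [intervalIntegral.integral_of_le (by linarith : -Real.pi ≤ Real.pi)]
    rw [← MeasureTheory.integral_const_mul]
    apply MeasureTheory.integral_congr_ae
    apply Filter.Eventually.of_forall
    intro x
    rw [hφ]
    simp only [Complex.real_smul, Complex.ofReal_mul]
    have hc : ((1 / (2 * Real.pi) : ℝ) : ℂ) = 1 / (2 * (Real.pi:ℂ)) := by push_cast; ring
    rw [hc]
    ring
  rw [heq]
  exact key

end PoissonMain
end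

section
/- Let g : ℝ → ℂ be a Schwartz function. Then the limit as t → 1 from the left of ∑_{m∈ℤ} t^{|m|} ∫_ℝ e^{2πimx} g(x) dx equals ∑_{m∈ℤ} g(m). (Abel-regularized form of the Poisson summation formula, i.e. of the distributional identity ∑_{m∈ℤ} e^{2πimt} = ∑_{m∈ℤ} δ(t − m).) -/
open Filter FourierTransform
open scoped RealInnerProductSpace

/-- Abel-regularized Poisson summation formula: for a Schwartz function `g`,
`lim_{t → 1⁻} ∑_{m ∈ ℤ} t^{|m|} ∫_ℝ e^{2πimx} g(x) dx = ∑_{m ∈ ℤ} g(m)`. -/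
theorem abel_poisson_summation (g : SchwartzMap ℝ ℂ) :
    Tendsto
      (fun t : ℝ => ∑' m : ℤ, ((t ^ |m| : ℝ) : ℂ)
        * ∫ x : ℝ, Complex.exp (2 * (Real.pi : ℂ) * Complex.I * (m : ℂ) * (x : ℂ)) * g x)
      (nhdsWithin 1 (Set.Ioo (0 : ℝ) 1))
      (nhds (∑' m : ℤ, g (m : ℝ))) := by
  obtain ⟨G, hG⟩ : ∃ G : SchwartzMap ℝ ℂ, G = SchwartzMap.fourierTransformCLM ℂ g := ⟨_, rfl⟩
  have hGf : ∀ x : ℝ, G x = 𝓕 (g : ℝ → ℂ) x := by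
    intro x; rw [hG]; rfl
  have hint : ∀ m : ℤ, (∫ x : ℝ, Complex.exp (2 * (Real.pi : ℂ) * Complex.I * (m : ℂ) * (x : ℂ))
      * g x) = G ((-m : ℤ) : ℝ) := by
    intro m
    rw [hGf, Real.fourier_eq']
    congr 1
    ext x
    rw [smul_eq_mul]
    congr 1
    rw [show (inner ℝ x ((-m : ℤ) : ℝ) : ℝ) = x * (-m : ℝ) by
      simp [RCLike.inner_apply, mul_comm]]
    push_cast
    ring_nf
  -- summability of the Fourier transform over the integers
  have h1 : Summable (fun m : ℤ => ‖G ((m : ℤ) : ℝ)‖) :=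
    summable_of_isBigO (Real.summable_abs_int_rpow one_lt_two)
      (((G.isBigO_cocompact_rpow (-2)).comp_tendsto Int.tendsto_coe_cofinite).norm_left)
  have hsum : Summable (fun m : ℤ => ‖G ((-m : ℤ) : ℝ)‖) := by
    have := ((Equiv.neg ℤ).summable_iff.mpr h1)
    simpa [Function.comp_def, Equiv.neg_apply] using this
  -- Poisson summation
  have hpoisson : ∑' m : ℤ, G ((-m : ℤ) : ℝ) = ∑' m : ℤ, g (m : ℝ) := by
    have hneg := (Equiv.neg ℤ).tsum_eq (fun m : ℤ => G ((m : ℤ) : ℝ))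
    simp only [Equiv.neg_apply] at hneg
    rw [show (∑' m : ℤ, G ((-m : ℤ) : ℝ)) = ∑' m : ℤ, G ((m : ℤ) : ℝ) by
      push_cast at hneg ⊢; exact hneg]
    have := SchwartzMap.tsum_eq_tsum_fourier g 0
    simp only [zero_add] at this
    rw [this]
    congr 1
    ext n
    simp [hGf]; rfl
  -- now apply dominated convergence
  simp only [hint]
  rw [← hpoisson]
  have key : Tendsto
      (fun t : ℝ => ∑' m : ℤ, ((t ^ |m| : ℝ) : ℂ) * G ((-m : ℤ) : ℝ))
      (nhdsWithin 1 (Set.Ioo (0 : ℝ) 1))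
      (nhds (∑' m : ℤ, G ((-m : ℤ) : ℝ))) := by
    apply tendsto_tsum_of_dominated_convergence hsum
    · intro m
      have h1 : Tendsto (fun t : ℝ => ((t ^ |m| : ℝ) : ℂ))
          (nhdsWithin 1 (Set.Ioo (0 : ℝ) 1)) (nhds 1) := by
        have h2 : Tendsto (fun t : ℝ => (t ^ |m| : ℝ)) (nhds (1:ℝ)) (nhds ((1:ℝ) ^ |m|)) :=
          (continuousAt_zpow₀ (1:ℝ) |m| (Or.inl one_ne_zero)).tendsto
        have h3 := Complex.continuous_ofReal.continuousAt.tendsto.comp h2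
        simp only [one_zpow, Complex.ofReal_one] at h3
        exact h3.mono_left nhdsWithin_le_nhds
      simpa using h1.mul_const (G ((-m : ℤ) : ℝ))
    · filter_upwards [self_mem_nhdsWithin] with t ht m
      rcases ht with ⟨ht0, ht1⟩
      rw [norm_mul]
      have : ‖((t ^ |m| : ℝ) : ℂ)‖ ≤ 1 := by
        rw [Complex.norm_real, Real.norm_eq_abs, abs_of_nonneg (zpow_nonneg ht0.le _),
          show |m| = ((|m|.toNat : ℕ) : ℤ) from (Int.toNat_of_nonneg (abs_nonneg m)).symm,
          zpow_natCast]
        exact pow_le_one₀ ht0.le ht1.le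
      calc ‖((t ^ |m| : ℝ) : ℂ)‖ * ‖G ((-m : ℤ) : ℝ)‖ ≤ 1 * ‖G ((-m : ℤ) : ℝ)‖ :=
            mul_le_mul_of_nonneg_right this (norm_nonneg _)
        _ = ‖G ((-m : ℤ) : ℝ)‖ := one_mul _
  exact key
end

section
/- Let n ≥ 1 and let U : ℝ → M_n(ℂ) be a differentiable family of matrices such that U(k) is unitary for every k. Suppose λ : ℝ → ℂ and v : ℝ → ℂⁿ are differentiable, with ‖v(k)‖ = 1 and U(k) v(k) = λ(k) v(k) for all k. Then for every k₀ with λ(k₀) = 1, the derivative of the eigenvalue satisfies λ'(k₀) = ⟨v(k₀), U'(k₀) v(k₀)⟩, where U'(k₀) is the entrywise derivative of U at k₀. -/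
open Finset

/-- Speed of an eigenvalue: if `U(k)` is a differentiable family of unitary matrices
with differentiable unit eigenvector family `v(k)` and eigenvalue family `λ(k)`,
then at any `k₀` with `λ(k₀) = 1`, one has `λ'(k₀) = ⟨v(k₀), U'(k₀) v(k₀)⟩`,
where `U'` is the entrywise derivative of `U`. -/
theorem eigenvalue_speed (n : ℕ) (hn : 1 ≤ n)
    (U U' : ℝ → Matrix (Fin n) (Fin n) ℂ)
    (hU' : ∀ k i j, HasDerivAt (fun s => U s i j) (U' k i j) k)
    (hunit : ∀ k, U k * (U k).conjTranspose = 1)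
    (lam : ℝ → ℂ) (v : ℝ → EuclideanSpace ℂ (Fin n))
    (hlam : Differentiable ℝ lam) (hv : Differentiable ℝ v)
    (hnorm : ∀ k, ‖v k‖ = 1)
    (heig : ∀ k, (U k).mulVec (v k) = lam k • v k)
    (k₀ : ℝ) (hk₀ : lam k₀ = 1) :
    deriv lam k₀ = (inner ℂ (v k₀) (WithLp.toLp 2 ((U' k₀).mulVec (v k₀))) : ℂ) := by
  classical
  set v' : Fin n → ℂ := fun i => deriv v k₀ i with hv'def
  -- component derivatives of v
  have hvd : ∀ i : Fin n, HasDerivAt (fun k => v k i) (v' i) k₀ := by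
    intro i
    have h := (hv k₀).hasDerivAt
    have := ((EuclideanSpace.proj i : EuclideanSpace ℂ (Fin n) →L[ℂ] ℂ).restrictScalars
      ℝ).hasFDerivAt.comp_hasDerivAt k₀ h
    exact this
  -- the sum of conj (v i) * v i is 1
  have hone : ∀ k, (∑ i, (starRingEnd ℂ) (v k i) * v k i) = 1 := by
    intro k
    have h1 : (∑ i, (starRingEnd ℂ) (v k i) * v k i) = (inner ℂ (v k) (v k) : ℂ) := by
      rw [PiLp.inner_apply]
      simp [RCLike.inner_apply, Complex.conj_mul']
    rw [h1, inner_self_eq_norm_sq_to_K, hnorm k]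
    norm_num
  -- eigenvector equation componentwise
  have heigc : ∀ k i, (∑ j, U k i j * v k j) = lam k * v k i := by
    intro k i
    have := congrFun (heig k) i
    simpa [Matrix.mulVec, dotProduct] using this
  -- lam equals the explicit scalar expression
  have hlamf : lam = fun k => ∑ i, (starRingEnd ℂ) (v k i) * ∑ j, U k i j * v k j := by
    funext k
    simp only [heigc k]
    rw [show (∑ i, (starRingEnd ℂ) (v k i) * (lam k * v k i))
        = lam k * ∑ i, (starRingEnd ℂ) (v k i) * v k i by
          rw [Finset.mul_sum]; exact Finset.sum_congr rfl fun i _ => by ring,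
      hone k, mul_one]
  -- derivative of the inner sums
  have hw : ∀ i, HasDerivAt (fun k => ∑ j, U k i j * v k j)
      (∑ j, (U' k₀ i j * v k₀ j + U k₀ i j * v' j)) k₀ :=
    fun i => HasDerivAt.fun_sum fun j _ => (hU' k₀ i j).mul (hvd j)
  have hconj : ∀ i, HasDerivAt (fun k => (starRingEnd ℂ) (v k i)) ((starRingEnd ℂ) (v' i)) k₀ := by
    intro i
    exact (hvd i).star
  set D : ℂ := ∑ i, ((starRingEnd ℂ) (v' i) * ∑ j, U k₀ i j * v k₀ j
      + (starRingEnd ℂ) (v k₀ i) * ∑ j, (U' k₀ i j * v k₀ j + U k₀ i j * v' j)) with hD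
  have hfd : HasDerivAt lam D k₀ := by
    rw [hlamf]
    exact HasDerivAt.fun_sum fun i _ => (hconj i).mul (hw i)
  rw [hfd.deriv]
  -- the normalization derivative is zero
  have hzero : (∑ i, ((starRingEnd ℂ) (v' i) * v k₀ i + (starRingEnd ℂ) (v k₀ i) * v' i)) = 0 := by
    have hg : HasDerivAt (fun k => ∑ i, (starRingEnd ℂ) (v k i) * v k i)
        (∑ i, ((starRingEnd ℂ) (v' i) * v k₀ i + (starRingEnd ℂ) (v k₀ i) * v' i)) k₀ :=
      HasDerivAt.fun_sum fun i _ => (hconj i).mul (hvd i)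
    have hconst : (fun k => ∑ i, (starRingEnd ℂ) (v k i) * v k i) = fun _ => (1 : ℂ) :=
      funext hone
    rw [hconst] at hg
    exact hg.unique (hasDerivAt_const k₀ 1)
  -- U v = v at k₀
  have hUv : ∀ i, (∑ j, U k₀ i j * v k₀ j) = v k₀ i := by
    intro i; rw [heigc k₀ i, hk₀, one_mul]
  -- conjTranspose acts as identity on v at k₀
  have hUstar : ∀ j, (∑ i, (starRingEnd ℂ) (v k₀ i) * U k₀ i j) = (starRingEnd ℂ) (v k₀ j) := by
    intro j
    have hlu : (U k₀).conjTranspose * U k₀ = 1 := mul_eq_one_comm.mp (hunit k₀)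
    have h1 : (U k₀).conjTranspose.mulVec (v k₀) = v k₀ := by
      have h2 : (U k₀).mulVec (v k₀) = v k₀ := by
        rw [heig k₀, hk₀, one_smul]
      calc (U k₀).conjTranspose.mulVec (v k₀)
          = (U k₀).conjTranspose.mulVec ((U k₀).mulVec (v k₀)) := by rw [h2]
        _ = ((U k₀).conjTranspose * U k₀).mulVec (v k₀) := by rw [Matrix.mulVec_mulVec]
        _ = v k₀ := by rw [hlu, Matrix.one_mulVec]
    have h3 : (∑ i, (starRingEnd ℂ) (U k₀ i j) * v k₀ i) = v k₀ j := by
      have := congrFun h1 j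
      simpa [Matrix.mulVec, dotProduct, Matrix.conjTranspose_apply] using this
    calc (∑ i, (starRingEnd ℂ) (v k₀ i) * U k₀ i j)
        = (starRingEnd ℂ) (∑ i, (starRingEnd ℂ) (U k₀ i j) * v k₀ i) := by
          rw [map_sum]; congr 1; funext i; rw [map_mul]; ring_nf; simp [mul_comm]
      _ = (starRingEnd ℂ) (v k₀ j) := by rw [h3]
  -- now compute D
  have hrhs : (inner ℂ (v k₀) (WithLp.toLp 2 ((U' k₀).mulVec (v k₀))) : ℂ)
      = ∑ i, (starRingEnd ℂ) (v k₀ i) * ∑ j, U' k₀ i j * v k₀ j := by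
    rw [PiLp.inner_apply]
    simp [RCLike.inner_apply, Matrix.mulVec, dotProduct]
    exact Finset.sum_congr rfl fun i _ => mul_comm _ _
  rw [hrhs, hD]
  have expand : ∀ i : Fin n,
      (starRingEnd ℂ) (v' i) * ∑ j, U k₀ i j * v k₀ j
      + (starRingEnd ℂ) (v k₀ i) * ∑ j, (U' k₀ i j * v k₀ j + U k₀ i j * v' j)
      = ((starRingEnd ℂ) (v' i) * v k₀ i
          + (starRingEnd ℂ) (v k₀ i) * ∑ j, U k₀ i j * v' j)
        + (starRingEnd ℂ) (v k₀ i) * ∑ j, U' k₀ i j * v k₀ j := by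
    intro i
    rw [hUv i, Finset.sum_add_distrib, mul_add]
    ring
  rw [Finset.sum_congr rfl (fun i _ => expand i), Finset.sum_add_distrib]
  have hcross : (∑ i, ((starRingEnd ℂ) (v' i) * v k₀ i
      + (starRingEnd ℂ) (v k₀ i) * ∑ j, U k₀ i j * v' j)) = 0 := by
    have hswap : (∑ i, (starRingEnd ℂ) (v k₀ i) * ∑ j, U k₀ i j * v' j)
        = ∑ i, (starRingEnd ℂ) (v k₀ i) * v' i := by
      calc (∑ i, (starRingEnd ℂ) (v k₀ i) * ∑ j, U k₀ i j * v' j)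
          = ∑ i, ∑ j, (starRingEnd ℂ) (v k₀ i) * (U k₀ i j * v' j) := by
            exact Finset.sum_congr rfl fun i _ => Finset.mul_sum _ _ _
        _ = ∑ j, ∑ i, (starRingEnd ℂ) (v k₀ i) * (U k₀ i j * v' j) := Finset.sum_comm
        _ = ∑ j, (∑ i, (starRingEnd ℂ) (v k₀ i) * U k₀ i j) * v' j := by
            refine Finset.sum_congr rfl fun j _ => ?_
            rw [Finset.sum_mul]
            exact Finset.sum_congr rfl fun i _ => by ring
        _ = ∑ j, (starRingEnd ℂ) (v k₀ j) * v' j := by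
            refine Finset.sum_congr rfl fun j _ => ?_
            rw [hUstar j]
    rw [Finset.sum_add_distrib, hswap, ← Finset.sum_add_distrib, hzero]
  rw [hcross, zero_add]
end

section
/- Let n ≥ 1 and let U be an n×n unitary matrix over ℂ. Then the averages (1/(2N+1)) ∑_{m=−N}^{N} U^m converge, as N → ∞, to the matrix of the orthogonal projection of ℂⁿ onto the eigenspace {x ∈ ℂⁿ : U x = x}. (Two-sided von Neumann mean ergodic theorem for a finite-dimensional unitary; in particular the limit is 0 if and only if 1 is not an eigenvalue of U.) -/
open Filter Topology

set_option maxHeartbeats 1600000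

lemma aux_sum_split (n : ℕ) (U : Matrix (Fin n) (Fin n) ℂ)
    (hU : U * U.conjTranspose = 1) (N : ℕ) :
    ∑ m ∈ Finset.Icc (-(N : ℤ)) (N : ℤ), U ^ m
      = ∑ k ∈ Finset.range (N + 1), U ^ k
        + ∑ k ∈ Finset.range N, U.conjTranspose ^ (k + 1) := by
  have hinv : U⁻¹ = U.conjTranspose := Matrix.inv_eq_right_inv hU
  induction N with
  | zero => simp
  | succ N ih =>
    have hins : Finset.Icc (-((N:ℕ)+1 : ℤ)) ((N:ℕ)+1 : ℤ)
        = insert (-((N:ℕ)+1 : ℤ)) (insert ((N:ℕ)+1 : ℤ)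
            (Finset.Icc (-(N : ℤ)) (N : ℤ))) := by
      ext m; simp only [Finset.mem_Icc, Finset.mem_insert]; omega
    have h1 : U ^ (((N:ℕ)+1 : ℤ)) = U ^ (N + 1) := by
      rw [show ((N:ℕ)+1 : ℤ) = ((N+1 : ℕ) : ℤ) by push_cast; ring, zpow_natCast]
    have h2 : U ^ (-((N:ℕ)+1 : ℤ)) = U.conjTranspose ^ (N + 1) := by
      rw [show ((N:ℕ)+1 : ℤ) = ((N+1 : ℕ) : ℤ) by push_cast; ring,
        Matrix.zpow_neg_natCast, ← Matrix.inv_pow', hinv]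
    push_cast
    rw [hins, Finset.sum_insert (by simp only [Finset.mem_insert, Finset.mem_Icc]; omega),
      Finset.sum_insert (by simp only [Finset.mem_Icc]; omega), ih,
      Finset.sum_range_succ (fun k => U ^ k) (N + 1),
      Finset.sum_range_succ (fun k => U.conjTranspose ^ (k + 1)) N, h2, h1]
    abel

/-- Two-sided von Neumann mean ergodic theorem for a finite-dimensional unitary:
for an `n × n` unitary matrix `U`, the averages `(1/(2N+1)) ∑_{m=-N}^{N} U^m`
converge as `N → ∞` to the matrix `P` of the orthogonal projection onto the
eigenspace `{x : U x = x}` (the unique Hermitian idempotent whose fixed vectors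
are exactly the fixed vectors of `U`); in particular the limit is `0` iff `1` is
not an eigenvalue of `U`. -/
theorem vonNeumann_mean_ergodic_unitary_matrix (n : ℕ) (hn : 1 ≤ n)
    (U : Matrix (Fin n) (Fin n) ℂ) (hU : U * U.conjTranspose = 1) :
    ∃ P : Matrix (Fin n) (Fin n) ℂ,
      P * P = P ∧
      P.conjTranspose = P ∧
      (∀ x : Fin n → ℂ, U.mulVec x = x ↔ P.mulVec x = x) ∧
      Tendsto
        (fun N : ℕ => (1 / (2 * (N : ℂ) + 1)) • ∑ m ∈ Finset.Icc (-(N : ℤ)) (N : ℤ), U ^ m)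
        atTop (nhds P) ∧
      (P = 0 ↔ ¬ ∃ x : Fin n → ℂ, x ≠ 0 ∧ U.mulVec x = x) := by
  classical
  set E := EuclideanSpace ℂ (Fin n)
  set Φ := Matrix.toEuclideanCLM (n := Fin n) (𝕜 := ℂ) with hΦ
  have hU' : U.conjTranspose * U = 1 := mul_eq_one_comm.mp hU
  set g : E →L[ℂ] E := Φ U with hg
  have hstar : star g = Φ U.conjTranspose := by
    rw [hg, ← map_star]; rfl
  have hgg : g * star g = 1 := by
    rw [hstar, hg, ← map_mul, hU, map_one]
  have hsg : star g * g = 1 := by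
    rw [hstar, hg, ← map_mul, hU', map_one]
  -- g is an isometry
  have hnorm : ∀ (f : E →L[ℂ] E), star f * f = 1 → ∀ x : E, ‖f x‖ = ‖x‖ := by
    intro f hf x
    have h1 : (inner ℂ (f x) (f x) : ℂ) = inner ℂ x x := by
      rw [← ContinuousLinearMap.adjoint_inner_right, ← ContinuousLinearMap.star_eq_adjoint,
        ← ContinuousLinearMap.mul_apply, hf, ContinuousLinearMap.one_apply]
    have h2 : ‖f x‖ ^ 2 = ‖x‖ ^ 2 := by
      rw [inner_self_eq_norm_sq_to_K (𝕜 := ℂ), inner_self_eq_norm_sq_to_K (𝕜 := ℂ)] at h1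
      exact_mod_cast h1
    calc ‖f x‖ = Real.sqrt (‖f x‖ ^ 2) := (Real.sqrt_sq (norm_nonneg _)).symm
      _ = Real.sqrt (‖x‖ ^ 2) := by rw [h2]
      _ = ‖x‖ := Real.sqrt_sq (norm_nonneg _)
  have hg1 : ‖g‖ ≤ 1 :=
    ContinuousLinearMap.opNorm_le_bound _ zero_le_one fun x => by
      rw [hnorm g hsg x, one_mul]
  have hh1 : ‖star g‖ ≤ 1 :=
    ContinuousLinearMap.opNorm_le_bound _ zero_le_one fun x => by
      rw [hnorm (star g) (by rw [star_star]; exact hgg) x, one_mul]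
  set F : Submodule ℂ E := LinearMap.eqLocus (g : E →ₗ[ℂ] E) 1 with hF
  have hFmem : ∀ v : E, v ∈ F ↔ g v = v := by
    intro v; rw [hF, LinearMap.mem_eqLocus]; rfl
  have hFeq : LinearMap.eqLocus ((star g : E →L[ℂ] E) : E →ₗ[ℂ] E) 1 = F := by
    ext v
    rw [LinearMap.mem_eqLocus, hFmem]
    show star g v = v ↔ _
    constructor
    · intro hv
      have : g (star g v) = g v := congrArg _ hv
      rw [← ContinuousLinearMap.mul_apply, hgg, ContinuousLinearMap.one_apply] at this
      exact this.symm
    · intro hv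
      have : star g (g v) = star g v := congrArg _ hv
      rw [← ContinuousLinearMap.mul_apply, hsg, ContinuousLinearMap.one_apply] at this
      exact this.symm
  set Q : E →L[ℂ] E := F.subtypeL ∘L F.orthogonalProjectionOnto with hQ
  have hQapply : ∀ v : E, Q v = (F.orthogonalProjectionOnto v : E) := fun v => rfl
  set P : Matrix (Fin n) (Fin n) ℂ := Φ.symm Q with hP
  have hΦP : Φ P = Q := Φ.apply_symm_apply Q
  -- vector-level convergence
  have hc0 : Tendsto (fun N : ℕ => (1 / (2 * (N : ℂ) + 1))) atTop (𝓝 0) := by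
    have hr : Tendsto (fun N : ℕ => (2 * (N : ℝ) + 1)⁻¹) atTop (𝓝 0) := by
      apply Tendsto.inv_tendsto_atTop
      apply tendsto_atTop_add_const_right
      exact (tendsto_natCast_atTop_atTop (R := ℝ)).const_mul_atTop two_pos
    have := (Complex.continuous_ofReal.tendsto 0).comp hr
    have h0 : ((0:ℝ):ℂ) = 0 := by norm_num
    rw [h0] at this
    refine this.congr fun N => ?_
    simp only [Function.comp_apply, one_div]
    push_cast
    ring
  have hc : Tendsto (fun N : ℕ => ((N : ℂ) + 1) / (2 * (N : ℂ) + 1)) atTop (𝓝 (1/2)) := by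
    have hne : ∀ N : ℕ, (2 * (N : ℂ) + 1) ≠ 0 := by
      intro N
      have : ((2 * N + 1 : ℕ) : ℂ) ≠ 0 := Nat.cast_ne_zero.mpr (Nat.succ_ne_zero _)
      push_cast at this
      convert this using 2
    have h : Tendsto (fun N : ℕ => (1/2 : ℂ) + (1/2 : ℂ) * (1 / (2 * (N:ℂ) + 1))) atTop
        (𝓝 ((1/2 : ℂ) + (1/2 : ℂ) * 0)) := tendsto_const_nhds.add (hc0.const_mul _)
    rw [mul_zero, add_zero] at h
    refine (h.congr fun N => ?_)
    have hN := hne N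
    field_simp
    ring
  have hb : ∀ (f : E →L[ℂ] E) (hf : ‖f‖ ≤ 1) (x : E),
      Tendsto (fun N : ℕ => (((N : ℂ) + 1))⁻¹ • ∑ k ∈ Finset.range (N + 1), (f ^ k) x)
        atTop (𝓝 (((LinearMap.eqLocus (f : E →ₗ[ℂ] E) 1).orthogonalProjectionOnto x : E))) := by
    intro f hf x
    have h := (f.tendsto_birkhoffAverage_orthogonalProjection hf x).comp
      (tendsto_add_atTop_nat 1)
    refine h.congr fun N => ?_
    simp only [Function.comp_apply, birkhoffAverage, birkhoffSum, id_eq]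
    push_cast
    congr 1
  have hvec : ∀ x : E,
      Tendsto (fun N : ℕ =>
          Φ ((1 / (2 * (N : ℂ) + 1)) • ∑ m ∈ Finset.Icc (-(N : ℤ)) (N : ℤ), U ^ m) x)
        atTop (𝓝 (Q x)) := by
    intro x
    have hb1 := hb g hg1 x
    have hb2 := hb (star g) hh1 x
    rw [hFeq] at hb2
    -- combined limit
    have key : ∀ N : ℕ,
        Φ ((1 / (2 * (N : ℂ) + 1)) • ∑ m ∈ Finset.Icc (-(N : ℤ)) (N : ℤ), U ^ m) x
          = (((N : ℂ) + 1) / (2 * (N : ℂ) + 1)) •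
              ((((N : ℂ) + 1))⁻¹ • ∑ k ∈ Finset.range (N + 1), (g ^ k) x)
            + ((((N : ℂ) + 1) / (2 * (N : ℂ) + 1)) •
              ((((N : ℂ) + 1))⁻¹ • ∑ k ∈ Finset.range (N + 1), ((star g) ^ k) x)
              - (1 / (2 * (N : ℂ) + 1)) • x) := by
      intro N
      have hNe : ((N : ℂ) + 1) ≠ 0 := Nat.cast_add_one_ne_zero N
      have hsc : ∀ S : E, (((N : ℂ) + 1) / (2 * (N : ℂ) + 1)) • ((((N : ℂ) + 1))⁻¹ • S)
          = (1 / (2 * (N : ℂ) + 1)) • S := by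
        intro S
        rw [smul_smul]
        congr 1
        rw [div_mul_eq_mul_div, mul_inv_cancel₀ hNe]
      rw [hsc, hsc]
      rw [aux_sum_split n U hU N, map_smul, map_add, map_sum, map_sum]
      simp only [map_pow, ← hstar, ContinuousLinearMap.smul_apply,
        ContinuousLinearMap.add_apply, ContinuousLinearMap.sum_apply, smul_add]
      congr 1
      rw [← smul_sub]
      congr 1
      rw [Finset.sum_range_succ' (fun k => ((star g) ^ k) x) N]
      simp only [pow_zero, ContinuousLinearMap.one_apply]
      rw [add_sub_cancel_right]
    rw [← hF] at hb1
    have hlim := (hc.smul hb1).add ((hc.smul hb2).sub (hc0.smul (tendsto_const_nhds (x := x))))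
    have hlim' := hlim.congr fun N => (key N).symm
    have heq : (1/2 : ℂ) • ((F.orthogonalProjectionOnto x : E))
        + ((1/2 : ℂ) • ((F.orthogonalProjectionOnto x : E)) - (0:ℂ) • x) = Q x := by
      rw [hQapply, zero_smul, sub_zero, ← add_smul]
      norm_num
    rwa [heq] at hlim'
  -- matrix-level convergence
  have hmat : Tendsto
      (fun N : ℕ => (1 / (2 * (N : ℂ) + 1)) • ∑ m ∈ Finset.Icc (-(N : ℤ)) (N : ℤ), U ^ m)
      atTop (𝓝 P) := by
    refine tendsto_pi_nhds.mpr fun i => tendsto_pi_nhds.mpr fun j => ?_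
    set bj : E := (WithLp.equiv 2 (Fin n → ℂ)).symm (Pi.single j 1) with hbj
    have hentry : ∀ A : Matrix (Fin n) (Fin n) ℂ, (Φ A bj) i = A i j := by
      intro A
      rw [hbj]
      rw [WithLp.equiv_symm_apply, Matrix.toEuclideanCLM_toLp]
      show (Matrix.toLin' A (Pi.single j 1)) i = A i j
      rw [Matrix.toLin'_apply, Matrix.mulVec_single]
      exact mul_one _
    have hQbj : Q bj = Φ P bj := by rw [hΦP]
    have hcoord := ((EuclideanSpace.proj i).continuous.tendsto (Q bj)).comp (hvec bj)
    have hPij : (EuclideanSpace.proj (𝕜 := ℂ) i) (Q bj) = P i j := by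
      rw [hQbj]
      show (Φ P bj) i = P i j
      exact hentry P
    rw [hPij] at hcoord
    refine hcoord.congr fun N => ?_
    show (Φ _ bj) i = _
    rw [hentry]
  -- fixed-point characterization
  have hfix : ∀ x : Fin n → ℂ, U.mulVec x = x ↔ P.mulVec x = x := by
    intro x
    set v : E := (WithLp.equiv 2 (Fin n → ℂ)).symm x with hv
    have happ : ∀ A : Matrix (Fin n) (Fin n) ℂ, (A.mulVec x = x ↔ Φ A v = v) := by
      intro A
      rw [hv, WithLp.equiv_symm_apply, Matrix.toEuclideanCLM_toLp]
      exact ⟨fun h => by rw [h], fun h => (WithLp.equiv 2 (Fin n → ℂ)).symm.injective h⟩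
    rw [happ U, happ P, hΦP, ← hg]
    rw [show (g v = v) ↔ v ∈ F from (hFmem v).symm]
    rw [hQapply]
    exact (Submodule.starProjection_eq_self_iff (K := F)).symm
  have hQQ : Q * Q = Q := by
    refine ContinuousLinearMap.ext fun x => ?_
    show Q (Q x) = Q x
    rw [hQapply (Q x), hQapply x, Submodule.orthogonalProjectionOnto_mem_subspace_eq_self]
  have hQstar : star Q = Q := isSelfAdjoint_starProjection F
  refine ⟨P, ?_, ?_, hfix, hmat, ?_⟩
  · calc P * P = Φ.symm (Q * Q) := (map_mul Φ.symm Q Q).symm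
      _ = Φ.symm Q := by rw [hQQ]
      _ = P := rfl
  · calc P.conjTranspose = Φ.symm (star Q) := (map_star Φ.symm Q).symm
      _ = Φ.symm Q := by rw [hQstar]
      _ = P := rfl
  · constructor
    · intro hP0
      rintro ⟨x, hx0, hxfix⟩
      have := (hfix x).mp hxfix
      rw [hP0, Matrix.zero_mulVec] at this
      exact hx0 this.symm
    · intro hno
      have hFbot : F = ⊥ := by
        rw [Submodule.eq_bot_iff]
        intro v hv
        by_contra hv0
        refine hno ⟨WithLp.equiv 2 (Fin n → ℂ) v, ?_, ?_⟩
        · intro h0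
          exact hv0 ((WithLp.equiv 2 (Fin n → ℂ)).injective (by simpa using h0))
        · have hgv : g v = v := (hFmem v).mp hv
          have h5 : Φ U ((WithLp.equiv 2 (Fin n → ℂ)).symm (WithLp.equiv 2 (Fin n → ℂ) v)) = v := by
            simpa using hgv
          rw [WithLp.equiv_symm_apply, Matrix.toEuclideanCLM_toLp, ← WithLp.equiv_symm_apply] at h5
          calc U.mulVec (WithLp.equiv 2 (Fin n → ℂ) v)
              = WithLp.equiv 2 (Fin n → ℂ) ((WithLp.equiv 2 (Fin n → ℂ)).symm
                  (U.mulVec (WithLp.equiv 2 (Fin n → ℂ) v))) := by simp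
            _ = WithLp.equiv 2 (Fin n → ℂ) v := by rw [h5]
      have hQ0 : Q = 0 := by
        refine ContinuousLinearMap.ext fun x => ?_
        show Q x = 0
        rw [hQapply]
        have hmem : (F.orthogonalProjectionOnto x : E) ∈ F := (F.orthogonalProjectionOnto x).2
        exact (Submodule.eq_bot_iff F).mp hFbot _ hmem
      calc P = Φ.symm Q := rfl
        _ = Φ.symm 0 := by rw [hQ0]
        _ = 0 := map_zero _
end

section
/- For every n ≥ 1 there exists a constant C > 0 (depending only on n) such that for every n×n unitary matrix U over ℂ and every natural number N, |det(I − U) · ∑_{j=−N}^{N} tr(U^j)| ≤ C. -/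
open Finset Matrix

/-- entries of a unitary matrix have absolute value at most 1 -/
lemma unitary_entry_bound {n : ℕ} (V : Matrix (Fin n) (Fin n) ℂ)
    (hV : V * V.conjTranspose = 1) (i j : Fin n) : ‖V i j‖ ≤ 1 := by
  have h := congrFun (congrFun hV i) i
  rw [Matrix.mul_apply, Matrix.one_apply_eq] at h
  have h2 : ∑ k, (Complex.normSq (V i k) : ℂ) = 1 := by
    rw [← h]; congr 1; ext k
    rw [Matrix.conjTranspose_apply, ← Complex.mul_conj]; rfl
  have h3 : ∑ k, Complex.normSq (V i k) = 1 := by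
    have := congrArg Complex.re h2
    simpa using this
  have h4 : Complex.normSq (V i j) ≤ 1 := by
    rw [← h3]
    exact Finset.single_le_sum (fun k _ => Complex.normSq_nonneg _) (Finset.mem_univ j)
  rw [Complex.norm_def]
  exact Real.sqrt_le_one.mpr h4

lemma abs_sub_le_add (a b : ℂ) : ‖a - b‖ ≤ ‖a‖ + ‖b‖ := by
  rw [sub_eq_add_neg]
  exact (norm_add_le _ _).trans (by rw [norm_neg])

/-- determinant entrywise bound -/
lemma det_entry_bound {n : ℕ} (M : Matrix (Fin n) (Fin n) ℂ)
    (hM : ∀ i j, ‖M i j‖ ≤ 2) :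
    ‖M.det‖ ≤ n.factorial * 2 ^ n := by
  rw [Matrix.det_apply']
  calc ‖∑ σ : Equiv.Perm (Fin n), Equiv.Perm.sign σ * ∏ i, M (σ i) i‖
      ≤ ∑ σ : Equiv.Perm (Fin n), ‖Equiv.Perm.sign σ * ∏ i, M (σ i) i‖ :=
        norm_sum_le _ _
    _ ≤ ∑ _σ : Equiv.Perm (Fin n), (2:ℝ) ^ n := by
        apply Finset.sum_le_sum
        intro σ _
        rw [norm_mul]
        have hsgn : ‖((Equiv.Perm.sign σ : ℤ) : ℂ)‖ = 1 := by
          rcases Int.isUnit_iff.mp (Equiv.Perm.sign σ).isUnit with h | h <;> simp [h]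
        rw [hsgn, one_mul, norm_prod]
        calc ∏ i, ‖M (σ i) i‖ ≤ ∏ _i : Fin n, (2:ℝ) :=
              Finset.prod_le_prod (fun i _ => norm_nonneg _) (fun i _ => hM _ _)
          _ = 2 ^ n := by simp
    _ = n.factorial * 2 ^ n := by
        rw [Finset.sum_const, Finset.card_univ, Fintype.card_perm, Fintype.card_fin,
          nsmul_eq_mul]

/-- Uniform boundedness of the Newton-identity remainder: for every `n ≥ 1` there is a
constant `C > 0`, depending only on `n`, such that for every `n × n` unitary matrix `U`
over `ℂ` and every `N : ℕ`, `|det(I - U) · ∑_{j=-N}^{N} tr(U^j)| ≤ C`. -/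
theorem det_mul_partial_trace_sum_bounded (n : ℕ) (hn : 1 ≤ n) :
    ∃ C : ℝ, 0 < C ∧
      ∀ U : Matrix (Fin n) (Fin n) ℂ, U * U.conjTranspose = 1 →
        ∀ N : ℕ,
          ‖(1 - U).det * ∑ j ∈ Finset.Icc (-(N : ℤ)) (N : ℤ), (U ^ j).trace‖ ≤ C := by
  have hnpos : (0:ℝ) < n := by exact_mod_cast hn
  refine ⟨(n:ℝ) * n * (2 * (n.factorial * 2 ^ n)), by positivity, ?_⟩
  intro U hU N
  have hdet : IsUnit U.det := by
    apply IsUnit.of_mul_eq_one U.conjTranspose.det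
    rw [← Matrix.det_mul, hU, Matrix.det_one]
  -- natural powers of U are unitary
  have hpow : ∀ k : ℕ, (U ^ k) * (U ^ k).conjTranspose = 1 := by
    intro k
    induction k with
    | zero => simp
    | succ k ih =>
      rw [pow_succ, Matrix.conjTranspose_mul, Matrix.mul_assoc,
        ← Matrix.mul_assoc U, hU, Matrix.one_mul, ih]
  -- integer powers of U are unitary
  have hzpow : ∀ j : ℤ, (U ^ j) * (U ^ j).conjTranspose = 1 := by
    intro j
    rcases j with k | k
    · rw [Int.ofNat_eq_coe, zpow_natCast]; exact hpow k
    · rw [show (Int.negSucc k) = -((k+1:ℕ):ℤ) by simp [Int.negSucc_eq], Matrix.zpow_neg_natCast]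
      have hinv : (U ^ (k+1))⁻¹ = (U ^ (k+1)).conjTranspose :=
        Matrix.inv_eq_right_inv (hpow (k+1))
      rw [hinv, Matrix.conjTranspose_conjTranspose]
      exact mul_eq_one_comm.mp (hpow (k+1))
  -- telescoping identity
  have htel : (∑ j ∈ Finset.Icc (-(N:ℤ)) (N:ℤ), U ^ j) * (1 - U)
      = U ^ (-(N:ℤ)) - U ^ ((N:ℤ)+1) := by
    rw [Finset.sum_mul]
    have step : ∀ j : ℤ, U ^ j * (1 - U) = U ^ j - U ^ (j+1) := by
      intro j
      rw [mul_sub, mul_one, Matrix.zpow_add_one hdet]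
    simp only [step]
    induction N with
    | zero => simp
    | succ N ih =>
      have hset : Finset.Icc (-((N:ℤ)+1)) ((N:ℤ)+1)
          = insert (-((N:ℤ)+1)) (insert ((N:ℤ)+1) (Finset.Icc (-(N:ℤ)) (N:ℤ))) := by
        ext a; simp only [Finset.mem_Icc, Finset.mem_insert]; omega
      push_cast
      rw [hset, Finset.sum_insert, Finset.sum_insert, ih]
      · have h1 : -((N:ℤ)+1) + 1 = -(N:ℤ) := by ring
        have h2 : (N:ℤ) + 1 + 1 = (N:ℤ) + 2 := by ring
        rw [h1, h2]
        abel
      · simp only [Finset.mem_insert, Finset.mem_Icc]; omega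
      · simp only [Finset.mem_insert, Finset.mem_Icc]; omega
  -- entry bounds for the difference of two unitary powers
  have hA : ∀ i k : Fin n,
      ‖(U ^ (-(N:ℤ)) - U ^ ((N:ℤ)+1)) i k‖ ≤ 2 := by
    intro i k
    rw [Matrix.sub_apply]
    calc ‖_ - _‖ ≤ ‖(U ^ (-(N:ℤ))) i k‖
          + ‖(U ^ ((N:ℤ)+1)) i k‖ := abs_sub_le_add _ _
      _ ≤ 1 + 1 := add_le_add (unitary_entry_bound _ (hzpow _) i k)
            (unitary_entry_bound _ (hzpow _) i k)
      _ = 2 := by norm_num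
  -- adjugate entry bound
  have hB : ∀ k i : Fin n,
      ‖(1 - U).adjugate k i‖ ≤ n.factorial * 2 ^ n := by
    intro k i
    rw [Matrix.adjugate_apply]
    apply det_entry_bound
    intro a b
    rw [Matrix.updateRow_apply]
    by_cases h : a = i
    · simp only [h, if_pos rfl]
      rcases eq_or_ne b k with rfl | hbk
      · simp
      · simp [Pi.single_apply, hbk]
    · simp only [if_neg h, Matrix.sub_apply]
      calc ‖(1 : Matrix (Fin n) (Fin n) ℂ) a b - U a b‖
          ≤ ‖(1 : Matrix (Fin n) (Fin n) ℂ) a b‖ + ‖U a b‖ :=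
            abs_sub_le_add _ _
        _ ≤ 1 + 1 := by
            refine add_le_add ?_ (unitary_entry_bound U hU a b)
            rcases eq_or_ne a b with rfl | hab
            · simp
            · simp [Matrix.one_apply, hab]
        _ = 2 := by norm_num
  -- the main identity
  have hid : (1 - U).det * ∑ j ∈ Finset.Icc (-(N:ℤ)) (N:ℤ), (U ^ j).trace
      = ((U ^ (-(N:ℤ)) - U ^ ((N:ℤ)+1)) * (1 - U).adjugate).trace := by
    rw [← htel, Matrix.mul_assoc, Matrix.mul_adjugate, Matrix.mul_smul, Matrix.mul_one,
      Matrix.trace_smul, smul_eq_mul, Matrix.trace_sum]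
  rw [hid]
  -- bound the trace
  set A := U ^ (-(N:ℤ)) - U ^ ((N:ℤ)+1) with hAdef
  set B := (1 - U).adjugate with hBdef
  have : (A * B).trace = ∑ i, ∑ k, A i k * B k i := by
    simp [Matrix.trace, Matrix.diag, Matrix.mul_apply]
  rw [this]
  calc ‖∑ i, ∑ k, A i k * B k i‖
      ≤ ∑ i, ‖∑ k, A i k * B k i‖ := norm_sum_le _ _
    _ ≤ ∑ _i : Fin n, ((n:ℝ) * (2 * (n.factorial * 2 ^ n))) := by
        apply Finset.sum_le_sum
        intro i _
        calc ‖∑ k, A i k * B k i‖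
            ≤ ∑ k, ‖A i k * B k i‖ := norm_sum_le _ _
          _ ≤ ∑ _k : Fin n, (2 * ((n.factorial : ℝ) * 2 ^ n)) := by
              apply Finset.sum_le_sum
              intro k _
              rw [norm_mul]
              exact mul_le_mul (hA i k) (hB k i) (norm_nonneg _) (by norm_num)
          _ = (n:ℝ) * (2 * (n.factorial * 2 ^ n)) := by
              rw [Finset.sum_const, Finset.card_univ, Fintype.card_fin, nsmul_eq_mul]
    _ = (n:ℝ) * n * (2 * (n.factorial * 2 ^ n)) := by
        rw [Finset.sum_const, Finset.card_univ, Fintype.card_fin, nsmul_eq_mul]; ring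
end
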